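/- Let U and V be disjoint finite point sets in R^d with |U| = p, |V| = q, 2 ≤ p, q ≤ d, p + q ≥ d + 1, such that all points of U ∪ V together with some additional points form a set in general position (in particular the p+q points of U ∪ V are affinely independent as far as possible: no d+1 on a hyperplane). If the relative interiors of Conv(U) and Conv(V) intersect, then for any disjoint supersets U' ⊇ U and V' ⊇ V with |U'| = |V'| = d, drawn from a common point set in general position in R^d, the relative interiors of Conv(U') and Conv(V') also intersect. -/

import Mathlib

open Set Filter Topology
open scoped Pointwise


lemma relint_beyond {E : Type*} [NormedAddCommGroup E] [NormedSpace ℝ E] {s : Set E} {z y : E}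
    (hz : z ∈ intrinsicInterior ℝ s) (hy : y ∈ s) :
    ∃ ε : ℝ, 0 < ε ∧ ε • (z - y) + z ∈ s := by
  obtain ⟨z', hz', rfl⟩ := mem_intrinsicInterior.1 hz
  have hyW : y ∈ affineSpan ℝ s := subset_affineSpan ℝ s hy
  have hmem : ∀ ε : ℝ, ε • ((z' : E) - y) + (z' : E) ∈ affineSpan ℝ s := by
    intro ε
    have := AffineSubspace.smul_vsub_vadd_mem (affineSpan ℝ s) ε z'.2 hyW z'.2
    simpa [vsub_eq_sub, vadd_eq_add] using this
  set c : ℝ → affineSpan ℝ s := fun ε => ⟨ε • ((z' : E) - y) + (z' : E), hmem ε⟩ with hc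
  have hcont : Continuous c := by
    apply Continuous.subtype_mk
    continuity
  have hc0 : c 0 = z' := by
    simp [hc]
  have hev : ∀ᶠ ε in 𝓝 (0 : ℝ), c ε ∈ interior ((↑) ⁻¹' s : Set <| affineSpan ℝ s) := by
    have : interior ((↑) ⁻¹' s : Set <| affineSpan ℝ s) ∈ 𝓝 (c 0) := by
      rw [hc0]
      exact isOpen_interior.mem_nhds hz'
    exact hcont.continuousAt.eventually_mem this
  have hev' : ∀ᶠ ε in 𝓝[>] (0 : ℝ), c ε ∈ interior ((↑) ⁻¹' s : Set <| affineSpan ℝ s) :=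
    nhdsWithin_le_nhds hev
  obtain ⟨ε, hεmem, hεpos⟩ := (hev'.and self_mem_nhdsWithin).exists
  have : c ε ∈ ((↑) ⁻¹' s : Set <| affineSpan ℝ s) := interior_subset hεmem
  exact ⟨ε, hεpos, this⟩

lemma relint_segment {E : Type*} [NormedAddCommGroup E] [NormedSpace ℝ E] {s : Set E}
    (hs : Convex ℝ s) {z y : E} (hz : z ∈ intrinsicInterior ℝ s) (hy : y ∈ s) {t : ℝ}
    (ht0 : 0 < t) (ht1 : t ≤ 1) : t • z + (1 - t) • y ∈ intrinsicInterior ℝ s := by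
  have hsne : s.Nonempty := ⟨y, hy⟩
  haveI : Nonempty s := hsne.coe_sort
  set W := affineSpan ℝ s with hW
  set y' : W := ⟨y, subset_affineSpan ℝ s hy⟩ with hy'
  set φ : W ≃ᵃⁱ[ℝ] W.direction := AffineIsometryEquiv.constVSub ℝ y' with hφ
  set ψ : W.direction →ᵃ[ℝ] E := W.subtype.comp φ.symm.toAffineEquiv.toAffineMap with hψ
  have hψ_coe : ∀ v : W.direction, ψ v = ((φ.symm v : W) : E) := fun v => rfl
  obtain ⟨z', hz', rfl⟩ := mem_intrinsicInterior.1 hz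
  set s0 : Set W.direction := ψ ⁻¹' s with hs0
  have hs0conv : Convex ℝ s0 := hs.affine_preimage ψ
  have hpre : s0 = ⇑φ.symm.toHomeomorph ⁻¹' (((↑) : W → E) ⁻¹' s) := rfl
  have hint : ∀ w : W, w ∈ interior (((↑) : W → E) ⁻¹' s) ↔
      φ w ∈ interior s0 := by
    intro w
    rw [hpre, ← φ.symm.toHomeomorph.preimage_interior]
    simp
  have hz0 : φ z' ∈ interior s0 := (hint z').1 hz'
  have hy0 : φ y' ∈ s0 := by
    have : ψ (φ y') = y := by rw [hψ_coe]; simp; rfl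
    simpa [hs0, mem_preimage, this] using hy
  have hw0 : t • φ z' + (1 - t) • φ y' ∈ interior s0 :=
    hs0conv.combo_interior_self_mem_interior hz0 hy0 ht0 (by linarith) (by ring)
  set w' : W := φ.symm (t • φ z' + (1 - t) • φ y') with hw'
  have hw'int : w' ∈ interior (((↑) : W → E) ⁻¹' s) := by
    rw [hint w']
    simpa [hw'] using hw0
  have hcoe : (w' : E) = t • (z' : E) + (1 - t) • y := by
    have h1 : (w' : E) = ψ (t • φ z' + (1 - t) • φ y') := rfl
    rw [h1, Convex.combo_affine_apply (by ring : t + (1 - t) = 1)]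
    have h2 : ψ (φ z') = (z' : E) := by rw [hψ_coe]; simp
    have h3 : ψ (φ y') = y := by rw [hψ_coe]; simp; rfl
    rw [h2, h3]
  exact mem_intrinsicInterior.2 ⟨w', hw'int, hcoe⟩

section helpers
variable {E : Type*} [NormedAddCommGroup E] [NormedSpace ℝ E] {s : Set E}

lemma relint_convex (hs : Convex ℝ s) : Convex ℝ (intrinsicInterior ℝ s) := by
  intro a ha b hb ta tb hta htb htab
  rcases eq_or_lt_of_le hta with h | h
  · have : ta = 0 := h.symm
    subst this
    have : tb = 1 := by linarith
    subst this
    simpa using hb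
  · have := relint_segment hs ha (intrinsicInterior_subset hb) h (by linarith)
    have htb' : tb = 1 - ta := by linarith
    rw [htb']
    exact this

lemma subset_closure_relint [FiniteDimensional ℝ E] (hs : Convex ℝ s) :
    s ⊆ closure (intrinsicInterior ℝ s) := by
  intro y hy
  obtain ⟨x0, hx0⟩ := Set.Nonempty.intrinsicInterior hs ⟨y, hy⟩
  have htend : Tendsto (fun t : ℝ => t • x0 + (1 - t) • y) (𝓝[>] (0:ℝ)) (𝓝 y) := by
    have hcont : Continuous (fun t : ℝ => t • x0 + (1 - t) • y) := by continuity
    have h := (hcont.tendsto 0).mono_left (nhdsWithin_le_nhds (s := Ioi (0:ℝ)))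
    simpa using h
  apply mem_closure_of_tendsto htend
  have h1 : ∀ᶠ t in 𝓝[>] (0:ℝ), t ∈ Ioi (0:ℝ) := self_mem_nhdsWithin
  have h2' : ∀ᶠ t in 𝓝 (0:ℝ), t < 1 := Filter.Tendsto.eventually_lt_const one_pos tendsto_id
  have h2 : ∀ᶠ t in 𝓝[>] (0:ℝ), t < 1 := nhdsWithin_le_nhds h2'
  filter_upwards [h1, h2] with t ht1 ht2
  exact relint_segment hs hx0 hy ht1 ht2.le

lemma sep_lemma [FiniteDimensional ℝ E] {C : Set E} (hC : Convex ℝ C) (hne : C.Nonempty)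
    (h0 : (0:E) ∉ C) : ∃ f : E →L[ℝ] ℝ, f ≠ 0 ∧ ∀ w ∈ C, f w ≤ 0 := by
  obtain ⟨c0, hc0⟩ := hne
  by_cases htop : affineSpan ℝ C = ⊤
  · -- full-dimensional case
    have hint : (interior C).Nonempty := by
      rw [hC.interior_nonempty_iff_affineSpan_eq_top]
      exact htop
    obtain ⟨f, hf⟩ := geometric_hahn_banach_open_point hC.interior isOpen_interior
      (fun h => h0 (interior_subset h))
    obtain ⟨a, ha⟩ := hint
    have hfa : f a < f 0 := hf a ha
    rw [map_zero] at hfa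
    refine ⟨f, ?_, ?_⟩
    · intro h
      rw [h] at hfa
      simp at hfa
    · intro w hw
      have htendw : Tendsto (fun t : ℝ => t * f a + (1 - t) * f w) (𝓝[>] (0:ℝ)) (𝓝 (f w)) := by
        have hcont : Continuous (fun t : ℝ => t * f a + (1 - t) * f w) := by continuity
        have h := (hcont.tendsto 0).mono_left (nhdsWithin_le_nhds (s := Ioi (0:ℝ)))
        simpa using h
      refine le_of_tendsto htendw ?_
      have h1 : ∀ᶠ t in 𝓝[>] (0:ℝ), t ∈ Ioi (0:ℝ) := self_mem_nhdsWithin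
      have h2' : ∀ᶠ t in 𝓝 (0:ℝ), t < 1 := Filter.Tendsto.eventually_lt_const one_pos tendsto_id
      have h2 : ∀ᶠ t in 𝓝[>] (0:ℝ), t < 1 := nhdsWithin_le_nhds h2'
      filter_upwards [h1, h2] with t ht1 ht2
      have hmem : t • a + (1 - t) • w ∈ interior C :=
        hC.combo_interior_self_mem_interior ha hw ht1 (by linarith) (by ring)
      have := hf _ hmem
      rw [map_zero] at this
      calc t * f a + (1 - t) * f w = f (t • a + (1 - t) • w) := by
            rw [map_add, map_smul, map_smul]; simp [smul_eq_mul]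
        _ ≤ 0 := this.le
  · -- degenerate case: C lies in a proper affine subspace
    have hdir : (affineSpan ℝ C).direction < ⊤ := by
      rcases lt_or_eq_of_le (le_top : (affineSpan ℝ C).direction ≤ ⊤) with h | h
      · exact h
      · exact absurd (AffineSubspace.direction_eq_top_iff_of_nonempty
          (⟨c0, subset_affineSpan ℝ C hc0⟩ : ((affineSpan ℝ C) : Set E).Nonempty) |>.1 h) htop
    obtain ⟨φ, hφ0, hφker⟩ := Submodule.exists_le_ker_of_lt_top _ hdir
    set f : E →L[ℝ] ℝ := LinearMap.toContinuousLinearMap φ with hf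
    have hfconst : ∀ w ∈ C, f w = f c0 := by
      intro w hw
      have : w - c0 ∈ (affineSpan ℝ C).direction := by
        have := AffineSubspace.vsub_mem_direction (subset_affineSpan ℝ C hw)
          (subset_affineSpan ℝ C hc0)
        simpa [vsub_eq_sub] using this
      have : φ (w - c0) = 0 := hφker this
      have : φ w - φ c0 = 0 := by rwa [map_sub] at this
      have : φ w = φ c0 := by linarith
      simpa [hf] using this
    have hfne : f ≠ 0 := by
      intro h
      apply hφ0
      ext v
      have : f v = 0 := by rw [h]; rfl
      simpa [hf] using this
    by_cases hsign : f c0 ≤ 0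
    · exact ⟨f, hfne, fun w hw => (hfconst w hw).le.trans hsign⟩
    · refine ⟨-f, ?_, fun w hw => ?_⟩
      · simpa using hfne
      · have := hfconst w hw
        simp only [ContinuousLinearMap.neg_apply]
        linarith [this, not_le.1 hsign]
end helpers
/-- Crossing extension lemma: if the (p-1)-simplex on U crosses the (q-1)-simplex on V,
then the (d-1)-simplices on any disjoint d-element supersets U' ⊇ U, V' ⊇ V also cross. -/
theorem crossing_extension (d n pc qc : ℕ)
    (hp2 : 2 ≤ pc) (hq2 : 2 ≤ qc) (hpd : pc ≤ d) (hqd : qc ≤ d) (hpq : d + 1 ≤ pc + qc)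
    (x : Fin n → Fin d → ℝ)
    (hgen : ∀ s : Finset (Fin n), s.card = d + 1 → AffineIndependent ℝ (fun i : s => x i))
    (U V U' V' : Finset (Fin n))
    (hUV : Disjoint U V) (hU : U.card = pc) (hV : V.card = qc)
    (hUU' : U ⊆ U') (hVV' : V ⊆ V') (hU'V' : Disjoint U' V')
    (hU' : U'.card = d) (hV' : V'.card = d)
    (hcross : (intrinsicInterior ℝ (convexHull ℝ (x '' U)) ∩
               intrinsicInterior ℝ (convexHull ℝ (x '' V))).Nonempty) :
    (intrinsicInterior ℝ (convexHull ℝ (x '' U')) ∩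
     intrinsicInterior ℝ (convexHull ℝ (x '' V'))).Nonempty := by
  by_contra hcon
  have hAconv : Convex ℝ (convexHull ℝ (x '' U')) := convex_convexHull ℝ _
  have hBconv : Convex ℝ (convexHull ℝ (x '' V')) := convex_convexHull ℝ _
  set A : Set (Fin d → ℝ) := convexHull ℝ (x '' U') with hA
  set B : Set (Fin d → ℝ) := convexHull ℝ (x '' V') with hB
  set RA := intrinsicInterior ℝ A with hRA
  set RB := intrinsicInterior ℝ B with hRB
  have hRAconv : Convex ℝ RA := relint_convex hAconv
  have hRBconv : Convex ℝ RB := relint_convex hBconv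
  have hU'ne : U'.Nonempty := Finset.card_pos.1 (by omega)
  have hV'ne : V'.Nonempty := Finset.card_pos.1 (by omega)
  have hAne : A.Nonempty := by
    obtain ⟨u, hu⟩ := hU'ne
    exact ⟨x u, subset_convexHull ℝ _ ⟨u, by simpa using hu, rfl⟩⟩
  have hBne : B.Nonempty := by
    obtain ⟨v, hv⟩ := hV'ne
    exact ⟨x v, subset_convexHull ℝ _ ⟨v, by simpa using hv, rfl⟩⟩
  have hRAne : RA.Nonempty := Set.Nonempty.intrinsicInterior hAconv hAne
  have hRBne : RB.Nonempty := Set.Nonempty.intrinsicInterior hBconv hBne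
  set C : Set (Fin d → ℝ) := RA - RB with hC
  have hCconv : Convex ℝ C := hRAconv.sub hRBconv
  have hCne : C.Nonempty := ⟨hRAne.choose - hRBne.choose,
    Set.sub_mem_sub hRAne.choose_spec hRBne.choose_spec⟩
  have h0C : (0 : Fin d → ℝ) ∉ C := by
    rintro ⟨a, ha, b, hb, hab⟩
    have : a = b := by
      have := sub_eq_zero.1 hab
      exact this
    subst this
    exact hcon ⟨a, ha, hb⟩
  obtain ⟨f, hfne, hfle⟩ := sep_lemma hCconv hCne h0C
  have hab : ∀ a ∈ RA, ∀ b ∈ RB, f a ≤ f b := by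
    intro a ha b hb
    have := hfle (a - b) (Set.sub_mem_sub ha hb)
    rw [map_sub] at this
    linarith
  have hAB : ∀ a ∈ A, ∀ b ∈ B, f a ≤ f b := by
    intro a ha b hb
    have step1 : ∀ b' ∈ RB, f a ≤ f b' := by
      intro b' hb'
      have hclosed : IsClosed {w : Fin d → ℝ | f w ≤ f b'} :=
        isClosed_le f.continuous continuous_const
      have hsub : closure RA ⊆ {w | f w ≤ f b'} :=
        closure_minimal (fun a' ha' => hab a' ha' b' hb') hclosed
      exact hsub (subset_closure_relint hAconv ha)
    have hclosed : IsClosed {w : Fin d → ℝ | f a ≤ f w} :=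
      isClosed_le continuous_const f.continuous
    have hsub : closure RB ⊆ {w | f a ≤ f w} := closure_minimal step1 hclosed
    exact hsub (subset_closure_relint hBconv hb)
  obtain ⟨z, hzU, hzV⟩ := hcross
  have hzA : z ∈ A :=
    convexHull_mono (Set.image_mono (f := x) (by exact_mod_cast hUU'))
      (intrinsicInterior_subset hzU)
  have hzB : z ∈ B :=
    convexHull_mono (Set.image_mono (f := x) (by exact_mod_cast hVV'))
      (intrinsicInterior_subset hzV)
  have key : ∀ i ∈ U ∪ V, f (x i) = f z := by
    intro i hi
    rcases Finset.mem_union.1 hi with hiU | hiV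
    · -- f ≤ f z on conv(x '' U), z in its relint
      have hsubA : convexHull ℝ (x '' U) ⊆ A :=
        convexHull_mono (Set.image_mono (f := x) (by exact_mod_cast hUU'))
      have hle' : ∀ w ∈ convexHull ℝ (x '' U), f w ≤ f z :=
        fun w hw => hAB w (hsubA hw) z hzB
      have hy : x i ∈ convexHull ℝ (x '' U) :=
        subset_convexHull ℝ _ ⟨i, by simpa using hiU, rfl⟩
      obtain ⟨ε, hε, hw⟩ := relint_beyond hzU hy
      have h1 : f (ε • (z - x i) + z) ≤ f z := hle' _ hw
      have h2 : f (ε • (z - x i) + z) = ε * (f z - f (x i)) + f z := by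
        rw [map_add, map_smul, map_sub]
        simp [smul_eq_mul]
      have h3 : f z ≤ f (x i) := by nlinarith [h1, h2]
      have h4 : f (x i) ≤ f z := hle' _ hy
      linarith
    · have hsubB : convexHull ℝ (x '' V) ⊆ B :=
        convexHull_mono (Set.image_mono (f := x) (by exact_mod_cast hVV'))
      have hle' : ∀ w ∈ convexHull ℝ (x '' V), f z ≤ f w :=
        fun w hw => hAB z hzA w (hsubB hw)
      have hy : x i ∈ convexHull ℝ (x '' V) :=
        subset_convexHull ℝ _ ⟨i, by simpa using hiV, rfl⟩
      obtain ⟨ε, hε, hw⟩ := relint_beyond hzV hy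
      have h1 : f z ≤ f (ε • (z - x i) + z) := hle' _ hw
      have h2 : f (ε • (z - x i) + z) = ε * (f z - f (x i)) + f z := by
        rw [map_add, map_smul, map_sub]
        simp [smul_eq_mul]
      have h3 : f (x i) ≤ f z := by nlinarith [h1, h2]
      have h4 : f z ≤ f (x i) := hle' _ hy
      linarith
  -- derive contradiction from general position
  have hcard : d + 1 ≤ (U ∪ V).card := by
    rw [Finset.card_union_of_disjoint hUV]
    omega
  obtain ⟨s', hs'sub, hs'card⟩ := Finset.exists_subset_card_eq hcard
  have hai : AffineIndependent ℝ (fun i : s' => x i) := hgen s' hs'card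
  have hspan : vectorSpan ℝ (Set.range fun i : s' => x i) ≤ LinearMap.ker (f : (Fin d → ℝ) →ₗ[ℝ] ℝ) := by
    rw [vectorSpan_def]
    apply Submodule.span_le.2
    rintro v hv
    rw [Set.mem_vsub] at hv
    obtain ⟨a, ⟨i, rfl⟩, b, ⟨j, rfl⟩, rfl⟩ := hv
    have hi' : f (x i) = f z := key i (hs'sub i.2)
    have hj' : f (x j) = f z := key j (hs'sub j.2)
    simp only [SetLike.mem_coe, LinearMap.mem_ker]
    have : f (x (i : Fin n) - x (j : Fin n)) = 0 := by
      rw [map_sub, hi', hj', sub_self]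
    simpa [vsub_eq_sub] using this
  have hfr : Module.finrank ℝ (vectorSpan ℝ (Set.range fun i : s' => x i)) = d :=
    hai.finrank_vectorSpan (by rw [Fintype.card_coe]; exact hs'card)
  have hle2 := Submodule.finrank_mono hspan
  have hsum : Module.finrank ℝ (LinearMap.range (f : (Fin d → ℝ) →ₗ[ℝ] ℝ)) +
      Module.finrank ℝ (LinearMap.ker (f : (Fin d → ℝ) →ₗ[ℝ] ℝ)) = d := by
    rw [LinearMap.finrank_range_add_finrank_ker]
    simp [Module.finrank_fin_fun]
  have hrange : 1 ≤ Module.finrank ℝ (LinearMap.range (f : (Fin d → ℝ) →ₗ[ℝ] ℝ)) := by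
    by_contra h
    have h0 : Module.finrank ℝ (LinearMap.range (f : (Fin d → ℝ) →ₗ[ℝ] ℝ)) = 0 := by omega
    rw [Submodule.finrank_eq_zero] at h0
    apply hfne
    ext v
    have : f v ∈ LinearMap.range (f : (Fin d → ℝ) →ₗ[ℝ] ℝ) := ⟨v, rfl⟩
    rw [h0] at this
    simpa using this
  omega
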